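/- Let (ξ_k) be a Markov chain whose kernels satisfy a P_k(A) ≤ Q_k(x,A) ≤ b P_k(A) with 0 < a ≤ 1, for x in a full-measure set. Let X_k = g_k(ξ_k) be centered with finite variance, τ_n² = Σ_{j=1}^n E(X_j²), σ_n² = E(S_n²). Then (a/(2-a)) τ_n² ≤ σ_n² ≤ ((2-a)/a) τ_n². In particular τ_n² → ∞ if and only if σ_n² → ∞. -/

import Mathlib

open MeasureTheory Filter

set_option maxHeartbeats 2000000


open MeasureTheory Filter Finset

section Numeric

variable {ρ : ℝ}

private lemma vckd_pow_sum_le (hρ0 : 0 ≤ ρ) (hρ1 : ρ < 1) (s : Finset ℕ) (φ : ℕ → ℕ)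
    (hinj : ∀ x ∈ s, ∀ y ∈ s, φ x = φ y → x = y) :
    ∑ i ∈ s, ρ ^ (φ i) ≤ (1 - ρ)⁻¹ := by
  have h1 : ∑ k ∈ s.image φ, ρ ^ k = ∑ i ∈ s, ρ ^ (φ i) := Finset.sum_image hinj
  set t := s.image φ
  have hsub : t ⊆ Finset.range (t.sup id + 1) := by
    intro k hk
    simp only [Finset.mem_range]
    exact Nat.lt_succ_of_le (Finset.le_sup (f := id) hk)
  have h2 : ∑ k ∈ t, ρ ^ k ≤ ∑ k ∈ Finset.range (t.sup id + 1), ρ ^ k :=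
    Finset.sum_le_sum_of_subset_of_nonneg hsub (fun k _ _ => pow_nonneg hρ0 k)
  have h3 : ∀ N : ℕ, ∑ k ∈ Finset.range N, ρ ^ k ≤ (1 - ρ)⁻¹ := by
    intro N
    rw [geom_sum_eq (ne_of_lt hρ1)]
    rw [div_le_iff_of_neg (by linarith : ρ - 1 < 0)]
    have hpow : 0 ≤ ρ ^ N := pow_nonneg hρ0 N
    have hinv : 0 ≤ (1 - ρ)⁻¹ := inv_nonneg.2 (by linarith)
    have : (1 - ρ)⁻¹ * (1 - ρ) = 1 := inv_mul_cancel₀ (by linarith)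
    nlinarith
  rw [← h1]; exact le_trans h2 (h3 _)

private lemma vckd_numeric (hρ0 : 0 ≤ ρ) (hρ1 : ρ < 1) (n : ℕ) (u v c : ℕ → ℝ)
    (hu : ∀ j, 0 ≤ u j) (hv : ∀ j, 0 ≤ v j) (hc : ∀ j, 0 ≤ c j)
    (hun : u (n + 1) = 0)
    (hvu : ∀ j ∈ Finset.Icc 1 n, v j ≤ ρ * u (j + 1))
    (huc : ∀ j ∈ Finset.Icc 1 n, u j ≤ c j + v j)
    (hcu : ∀ j ∈ Finset.Icc 1 n, c j ≤ u j + v j) :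
    (1 - ρ) / (1 + ρ) * ∑ j ∈ Finset.Icc 1 n, c j ^ 2 ≤
        ∑ j ∈ Finset.Icc 1 n, (u j ^ 2 - v j ^ 2) ∧
      ∑ j ∈ Finset.Icc 1 n, (u j ^ 2 - v j ^ 2) ≤
        (1 - ρ)⁻¹ * (1 + ρ) * ∑ j ∈ Finset.Icc 1 n, c j ^ 2 := by
  have h1ρ : (0:ℝ) < 1 - ρ := by linarith
  have h1ρ' : (0:ℝ) < 1 + ρ := by linarith
  set Y := ∑ j ∈ Finset.Icc 1 n, u j ^ 2 with hY
  set τ := ∑ j ∈ Finset.Icc 1 n, c j ^ 2 with hτ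
  set σ := ∑ j ∈ Finset.Icc 1 n, (u j ^ 2 - v j ^ 2) with hσ
  have hYpos : 0 ≤ Y := Finset.sum_nonneg fun j _ => sq_nonneg _
  have hτpos : 0 ≤ τ := Finset.sum_nonneg fun j _ => sq_nonneg _
  -- shift bound
  have hshift : ∑ j ∈ Finset.Icc 1 n, u (j + 1) ^ 2 ≤ Y := by
    rcases Nat.eq_zero_or_pos n with hn | hn
    · subst hn
      have he : Finset.Icc 1 0 = (∅ : Finset ℕ) := rfl
      rw [he, Finset.sum_empty]; exact hYpos
    · have hmap : ∑ j ∈ Finset.Icc 1 n, u (j + 1) ^ 2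
          = ∑ j ∈ Finset.Icc 2 (n + 1), u j ^ 2 := by
        rw [show Finset.Icc 2 (n+1) = Finset.map (addRightEmbedding 1) (Finset.Icc 1 n) by
          rw [Finset.map_add_right_Icc]]
        rw [Finset.sum_map]
        rfl
      rw [hmap]
      have hsplit : Finset.Icc 2 (n + 1) = insert (n + 1) (Finset.Icc 2 n) := by
        ext x; simp [Finset.mem_Icc, Finset.mem_insert]; omega
      rw [hsplit, Finset.sum_insert (by simp [Finset.mem_Icc])]
      rw [hun]
      have : ∑ j ∈ Finset.Icc 2 n, u j ^ 2 ≤ Y :=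
        Finset.sum_le_sum_of_subset_of_nonneg
          (Finset.Icc_subset_Icc (by norm_num) le_rfl) (fun j _ _ => sq_nonneg _)
      simpa using this
  -- lower bound chain
  have hσ_low : (1 - ρ ^ 2) * Y ≤ σ := by
    have hvsum : ∑ j ∈ Finset.Icc 1 n, v j ^ 2
        ≤ ρ ^ 2 * ∑ j ∈ Finset.Icc 1 n, u (j + 1) ^ 2 := by
      rw [Finset.mul_sum]
      refine Finset.sum_le_sum fun j hj => ?_
      have h := hvu j hj
      have := hv j
      nlinarith [hu (j+1), mul_nonneg hρ0 (hu (j+1))]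
    have : σ = Y - ∑ j ∈ Finset.Icc 1 n, v j ^ 2 := by
      rw [hσ, hY, ← Finset.sum_sub_distrib]
    have hρ2 : 0 ≤ ρ ^ 2 := sq_nonneg ρ
    nlinarith [mul_le_mul_of_nonneg_left hshift hρ2]
  have hd : ∑ j ∈ Finset.Icc 1 n, (u j + ρ * u (j + 1)) ^ 2 ≤ (1 + ρ) ^ 2 * Y := by
    have step : ∀ j ∈ Finset.Icc 1 n,
        (u j + ρ * u (j + 1)) ^ 2 ≤ (1 + ρ) * u j ^ 2 + ρ * (1 + ρ) * u (j + 1) ^ 2 := by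
      intro j _
      nlinarith [sq_nonneg (u j - u (j + 1)), hρ0]
    calc ∑ j ∈ Finset.Icc 1 n, (u j + ρ * u (j + 1)) ^ 2
        ≤ ∑ j ∈ Finset.Icc 1 n, ((1 + ρ) * u j ^ 2 + ρ * (1 + ρ) * u (j + 1) ^ 2) :=
          Finset.sum_le_sum step
      _ = (1 + ρ) * Y + ρ * (1 + ρ) * ∑ j ∈ Finset.Icc 1 n, u (j + 1) ^ 2 := by
          rw [Finset.sum_add_distrib, ← Finset.mul_sum, ← Finset.mul_sum]
      _ ≤ (1 + ρ) * Y + ρ * (1 + ρ) * Y := by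
          have : 0 ≤ ρ * (1 + ρ) := mul_nonneg hρ0 (by linarith)
          nlinarith [mul_le_mul_of_nonneg_left hshift this]
      _ = (1 + ρ) ^ 2 * Y := by ring
  have hτY : τ ≤ (1 + ρ) ^ 2 * Y := by
    refine le_trans ?_ hd
    refine Finset.sum_le_sum fun j hj => ?_
    have h1 := hcu j hj
    have h2 := hvu j hj
    have : c j ≤ u j + ρ * u (j + 1) := by linarith
    nlinarith [hc j, hu j, mul_nonneg hρ0 (hu (j+1))]
  constructor
  · -- lower bound
    have key : (1 - ρ) / (1 + ρ) * ((1 + ρ) ^ 2 * Y) = (1 - ρ ^ 2) * Y := by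
      field_simp; ring
    calc (1 - ρ) / (1 + ρ) * τ ≤ (1 - ρ) / (1 + ρ) * ((1 + ρ) ^ 2 * Y) := by
          apply mul_le_mul_of_nonneg_left hτY
          positivity
      _ = (1 - ρ ^ 2) * Y := key
      _ ≤ σ := hσ_low
  · -- upper bound
    have hw : ∀ d j, j + d = n + 1 → 1 ≤ j →
        u j ≤ ∑ m ∈ Finset.Icc j n, ρ ^ (m - j) * c m := by
      intro d
      induction d with
      | zero =>
        intro j hj _
        have : j = n + 1 := by omega
        subst this
        rw [Finset.Icc_eq_empty_of_lt (by omega)]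
        simp [hun]
      | succ d ih =>
        intro j hj hj1
        have hjn : j ≤ n := by omega
        have hsplit : Finset.Icc j n = insert j (Finset.Icc (j + 1) n) := by
          ext x; simp [Finset.mem_Icc, Finset.mem_insert]; omega
        have hrw : ∑ m ∈ Finset.Icc j n, ρ ^ (m - j) * c m
            = c j + ρ * ∑ m ∈ Finset.Icc (j + 1) n, ρ ^ (m - (j + 1)) * c m := by
          rw [hsplit, Finset.sum_insert (by simp [Finset.mem_Icc])]
          simp only [Nat.sub_self, pow_zero, one_mul]
          congr 1
          rw [Finset.mul_sum]
          refine Finset.sum_congr rfl fun m hm => ?_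
          have hm' : j + 1 ≤ m := (Finset.mem_Icc.mp hm).1
          have : m - j = (m - (j + 1)) + 1 := by omega
          rw [this, pow_succ]; ring
        rw [hrw]
        have h1 := huc j (Finset.mem_Icc.mpr ⟨hj1, hjn⟩)
        have h2 := hvu j (Finset.mem_Icc.mpr ⟨hj1, hjn⟩)
        have h3 := ih (j + 1) (by omega) (by omega)
        nlinarith [mul_le_mul_of_nonneg_left h3 hρ0]
    have hY_le : Y ≤ ((1 - ρ)⁻¹) ^ 2 * τ := by
      have hper : ∀ j ∈ Finset.Icc 1 n,
          u j ^ 2 ≤ (1 - ρ)⁻¹ * ∑ m ∈ Finset.Icc j n, ρ ^ (m - j) * c m ^ 2 := by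
        intro j hj
        obtain ⟨hj1, hjn⟩ := Finset.mem_Icc.mp hj
        have hwj := hw (n + 1 - j) j (by omega) hj1
        have hw_nonneg : 0 ≤ ∑ m ∈ Finset.Icc j n, ρ ^ (m - j) * c m :=
          Finset.sum_nonneg fun m _ => mul_nonneg (pow_nonneg hρ0 _) (hc m)
        have hcs : (∑ m ∈ Finset.Icc j n, ρ ^ (m - j) * c m) ^ 2
            ≤ (∑ m ∈ Finset.Icc j n, ρ ^ (m - j)) *
              ∑ m ∈ Finset.Icc j n, ρ ^ (m - j) * c m ^ 2 := by
          have := Finset.sum_mul_sq_le_sq_mul_sq (Finset.Icc j n)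
            (fun m => Real.sqrt (ρ ^ (m - j))) (fun m => Real.sqrt (ρ ^ (m - j)) * c m)
          have e1 : ∀ m, Real.sqrt (ρ ^ (m - j)) * (Real.sqrt (ρ ^ (m - j)) * c m)
              = ρ ^ (m - j) * c m := by
            intro m
            rw [← mul_assoc, Real.mul_self_sqrt (pow_nonneg hρ0 _)]
          have e2 : ∀ m, Real.sqrt (ρ ^ (m - j)) ^ 2 = ρ ^ (m - j) := fun m =>
            Real.sq_sqrt (pow_nonneg hρ0 _)
          have e3 : ∀ m, (Real.sqrt (ρ ^ (m - j)) * c m) ^ 2 = ρ ^ (m - j) * c m ^ 2 := by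
            intro m; rw [mul_pow, e2]
          simp only [e1, e2, e3] at this
          exact this
        have hgeo : ∑ m ∈ Finset.Icc j n, ρ ^ (m - j) ≤ (1 - ρ)⁻¹ :=
          vckd_pow_sum_le hρ0 hρ1 _ (fun m => m - j) (by
            intro x hx y hy hxy
            simp only [Finset.mem_Icc] at hx hy
            omega)
        have hsum2 : 0 ≤ ∑ m ∈ Finset.Icc j n, ρ ^ (m - j) * c m ^ 2 :=
          Finset.sum_nonneg fun m _ => mul_nonneg (pow_nonneg hρ0 _) (sq_nonneg _)
        calc u j ^ 2 ≤ (∑ m ∈ Finset.Icc j n, ρ ^ (m - j) * c m) ^ 2 := by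
              nlinarith [hu j]
          _ ≤ (∑ m ∈ Finset.Icc j n, ρ ^ (m - j)) *
              ∑ m ∈ Finset.Icc j n, ρ ^ (m - j) * c m ^ 2 := hcs
          _ ≤ (1 - ρ)⁻¹ * ∑ m ∈ Finset.Icc j n, ρ ^ (m - j) * c m ^ 2 :=
              mul_le_mul_of_nonneg_right hgeo hsum2
      have hswap : ∑ j ∈ Finset.Icc 1 n, ∑ m ∈ Finset.Icc j n, ρ ^ (m - j) * c m ^ 2
          = ∑ m ∈ Finset.Icc 1 n, ∑ j ∈ Finset.Icc 1 m, ρ ^ (m - j) * c m ^ 2 := by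
        refine Finset.sum_comm' ?_
        intro j m
        simp only [Finset.mem_Icc]
        omega
      have hinner : ∀ m ∈ Finset.Icc 1 n,
          ∑ j ∈ Finset.Icc 1 m, ρ ^ (m - j) * c m ^ 2 ≤ (1 - ρ)⁻¹ * c m ^ 2 := by
        intro m _
        rw [← Finset.sum_mul]
        refine mul_le_mul_of_nonneg_right ?_ (sq_nonneg _)
        exact vckd_pow_sum_le hρ0 hρ1 _ (fun j => m - j) (by
          intro x hx y hy hxy
          simp only [Finset.mem_Icc] at hx hy
          omega)
      calc Y ≤ ∑ j ∈ Finset.Icc 1 n, (1 - ρ)⁻¹ *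
              ∑ m ∈ Finset.Icc j n, ρ ^ (m - j) * c m ^ 2 := Finset.sum_le_sum hper
        _ = (1 - ρ)⁻¹ * ∑ m ∈ Finset.Icc 1 n, ∑ j ∈ Finset.Icc 1 m,
              ρ ^ (m - j) * c m ^ 2 := by rw [← Finset.mul_sum, hswap]
        _ ≤ (1 - ρ)⁻¹ * ∑ m ∈ Finset.Icc 1 n, (1 - ρ)⁻¹ * c m ^ 2 := by
            refine mul_le_mul_of_nonneg_left (Finset.sum_le_sum hinner) ?_
            positivity
        _ = ((1 - ρ)⁻¹) ^ 2 * τ := by rw [← Finset.mul_sum]; ring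
    -- σ ≤ Σ c_j (u_j + ρ u_{j+1})
    have hσ_le : σ ≤ ∑ j ∈ Finset.Icc 1 n, c j * (u j + ρ * u (j + 1)) := by
      refine Finset.sum_le_sum fun j hj => ?_
      have h1 := huc j hj
      have h2 := hvu j hj
      have h3 := hc j
      have h4 := hu j
      have h5 := hv j
      have h6 : 0 ≤ ρ * u (j + 1) := mul_nonneg hρ0 (hu (j + 1))
      nlinarith
    have hcs2 : (∑ j ∈ Finset.Icc 1 n, c j * (u j + ρ * u (j + 1))) ^ 2
        ≤ τ * ∑ j ∈ Finset.Icc 1 n, (u j + ρ * u (j + 1)) ^ 2 :=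
      Finset.sum_mul_sq_le_sq_mul_sq _ _ _
    have hd_nonneg : 0 ≤ ∑ j ∈ Finset.Icc 1 n, (u j + ρ * u (j + 1)) ^ 2 :=
      Finset.sum_nonneg fun j _ => sq_nonneg _
    have hfin : (∑ j ∈ Finset.Icc 1 n, c j * (u j + ρ * u (j + 1))) ^ 2
        ≤ τ * ((1 + ρ) ^ 2 * (((1 - ρ)⁻¹) ^ 2 * τ)) := by
      refine le_trans hcs2 ?_
      refine mul_le_mul_of_nonneg_left (le_trans hd ?_) hτpos
      exact mul_le_mul_of_nonneg_left hY_le (sq_nonneg _)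
    have hsum_nonneg : 0 ≤ ∑ j ∈ Finset.Icc 1 n, c j * (u j + ρ * u (j + 1)) :=
      Finset.sum_nonneg fun j _ => mul_nonneg (hc j)
        (add_nonneg (hu j) (mul_nonneg hρ0 (hu (j + 1))))
    have hrhs : τ * ((1 + ρ) ^ 2 * (((1 - ρ)⁻¹) ^ 2 * τ)) = ((1 - ρ)⁻¹ * (1 + ρ) * τ) ^ 2 := by
      ring
    have hfinal : ∑ j ∈ Finset.Icc 1 n, c j * (u j + ρ * u (j + 1))
        ≤ (1 - ρ)⁻¹ * (1 + ρ) * τ := by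
      have hr_nonneg : 0 ≤ (1 - ρ)⁻¹ * (1 + ρ) * τ := by positivity
      rw [hrhs] at hfin
      exact (pow_le_pow_iff_left₀ hsum_nonneg hr_nonneg two_ne_zero).mp hfin
    linarith [hσ_le, hfinal]

end Numeric



open MeasureTheory Filter Finset

section Helpers

variable {Ω : Type*} {m : MeasurableSpace Ω} {P : Measure Ω}

private lemma vckd_int_of_bound [IsFiniteMeasure P] {f : Ω → ℝ}
    (hf : AEStronglyMeasurable f P) {C : ℝ} (h : ∀ᵐ ω ∂P, |f ω| ≤ C) :
    Integrable f P :=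
  Integrable.mono' (integrable_const C) hf (by simpa [Real.norm_eq_abs] using h)

private lemma vckd_memL2_of_bound [IsFiniteMeasure P] {f : Ω → ℝ}
    (hf : AEStronglyMeasurable f P) {C : ℝ} (h : ∀ᵐ ω ∂P, |f ω| ≤ C) :
    MemLp f 2 P :=
  MemLp.of_bound hf C (by simpa [Real.norm_eq_abs] using h)

private lemma vckd_int_mul {f g : Ω → ℝ} (hf : MemLp f 2 P) (hg : MemLp g 2 P) :
    Integrable (fun ω => f ω * g ω) P := by
  have h1 := hf.integrable_sq
  have h2 := hg.integrable_sq
  have hdom : Integrable (fun ω => (1/2 : ℝ) * (f ω ^ 2 + g ω ^ 2)) P := by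
    simpa using (h1.add h2).const_mul (1/2 : ℝ)
  refine Integrable.mono' hdom (hf.1.mul hg.1) ?_
  refine Filter.Eventually.of_forall fun ω => ?_
  have : 2 * (|f ω| * |g ω|) ≤ |f ω| ^ 2 + |g ω| ^ 2 := by nlinarith [sq_nonneg (|f ω| - |g ω|)]
  have habs : ‖f ω * g ω‖ = |f ω| * |g ω| := by rw [Real.norm_eq_abs, abs_mul]
  rw [habs]
  have e1 : |f ω| ^ 2 = f ω ^ 2 := sq_abs _
  have e2 : |g ω| ^ 2 = g ω ^ 2 := sq_abs _
  nlinarith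

private lemma vckd_cs {f g : Ω → ℝ} (hf : MemLp f 2 P) (hg : MemLp g 2 P) :
    ∫ ω, f ω * g ω ∂P ≤
      Real.sqrt (∫ ω, f ω ^ 2 ∂P) * Real.sqrt (∫ ω, g ω ^ 2 ∂P) := by
  set A := ∫ ω, f ω ^ 2 ∂P with hA
  set B := ∫ ω, g ω ^ 2 ∂P with hB
  set C := ∫ ω, f ω * g ω ∂P with hC
  have hAnn : 0 ≤ A := integral_nonneg fun ω => sq_nonneg _
  have hBnn : 0 ≤ B := integral_nonneg fun ω => sq_nonneg _
  have hq : ∀ t : ℝ, 0 ≤ A * t ^ 2 + 2 * C * t + B := by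
    intro t
    have hint : ∫ ω, (t * f ω + g ω) ^ 2 ∂P
        = A * t ^ 2 + 2 * C * t + B := by
      have hexp : ∀ ω, (t * f ω + g ω) ^ 2
          = t ^ 2 * f ω ^ 2 + (2 * t) * (f ω * g ω) + g ω ^ 2 := by intro ω; ring
      rw [integral_congr_ae (Filter.Eventually.of_forall hexp)]
      have i1 : Integrable (fun ω => t ^ 2 * f ω ^ 2) P := hf.integrable_sq.const_mul _
      have i2 : Integrable (fun ω => (2 * t) * (f ω * g ω)) P :=
        (vckd_int_mul hf hg).const_mul _
      have i12 : Integrable (fun ω => t ^ 2 * f ω ^ 2 + (2 * t) * (f ω * g ω)) P := i1.add i2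
      rw [integral_add i12 hg.integrable_sq, integral_add i1 i2,
        integral_const_mul, integral_const_mul]
      ring
    rw [← hint]
    exact integral_nonneg fun ω => sq_nonneg _
  have hdisc : discrim A (2 * C) B ≤ 0 := by
    rcases eq_or_lt_of_le hAnn with hA0 | hApos
    · -- A = 0 : then 2*C*t + B ≥ 0 for all t forces C = 0
      have hC0 : C = 0 := by
        by_contra hC0
        have h1 := hq ((-B - 1) / (2 * C))
        rw [← hA0] at h1
        have h2C : 2 * C ≠ 0 := by intro h; exact hC0 (by linarith [mul_eq_zero.mp h])
        field_simp at h1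
        have hC2' : C ^ 2 ≠ 0 := pow_ne_zero 2 hC0
        have h3 : (-4:ℝ) = ((-B - 1) * (0 * (-B - 1) + 2 ^ 2 * C ^ 2) + B * 2 ^ 2 * C ^ 2) / C ^ 2 := by
          rw [eq_div_iff hC2']; ring
        linarith [h1, h3]
      rw [discrim, hC0, ← hA0]; ring_nf; simp [mul_nonneg hBnn]
    · exact discrim_le_zero fun t => by nlinarith [hq t]
  rw [discrim] at hdisc
  have hC2 : C ^ 2 ≤ A * B := by nlinarith
  calc C ≤ |C| := le_abs_self _
    _ = Real.sqrt (C ^ 2) := (Real.sqrt_sq_eq_abs C).symm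
    _ ≤ Real.sqrt (A * B) := Real.sqrt_le_sqrt hC2
    _ = Real.sqrt A * Real.sqrt B := Real.sqrt_mul hAnn B

private lemma vckd_minkowski {f g : Ω → ℝ} (hf : MemLp f 2 P) (hg : MemLp g 2 P) :
    Real.sqrt (∫ ω, (f ω + g ω) ^ 2 ∂P) ≤
      Real.sqrt (∫ ω, f ω ^ 2 ∂P) + Real.sqrt (∫ ω, g ω ^ 2 ∂P) := by
  set A := ∫ ω, f ω ^ 2 ∂P
  set B := ∫ ω, g ω ^ 2 ∂P
  have hAnn : 0 ≤ A := integral_nonneg fun ω => sq_nonneg _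
  have hBnn : 0 ≤ B := integral_nonneg fun ω => sq_nonneg _
  have hcs := vckd_cs hf hg
  have hexp : ∫ ω, (f ω + g ω) ^ 2 ∂P = A + 2 * ∫ ω, f ω * g ω ∂P + B := by
    have : ∀ ω, (f ω + g ω) ^ 2 = f ω ^ 2 + 2 * (f ω * g ω) + g ω ^ 2 := fun ω => by ring
    rw [integral_congr_ae (Filter.Eventually.of_forall this)]
    have i2 : Integrable (fun ω => (2 : ℝ) * (f ω * g ω)) P := (vckd_int_mul hf hg).const_mul _
    have i12 : Integrable (fun ω => f ω ^ 2 + (2 : ℝ) * (f ω * g ω)) P :=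
      hf.integrable_sq.add i2
    rw [integral_add i12 hg.integrable_sq, integral_add hf.integrable_sq i2, integral_const_mul]
  have hle : ∫ ω, (f ω + g ω) ^ 2 ∂P ≤ (Real.sqrt A + Real.sqrt B) ^ 2 := by
    rw [hexp]
    have h1 : Real.sqrt A ^ 2 = A := Real.sq_sqrt hAnn
    have h2 : Real.sqrt B ^ 2 = B := Real.sq_sqrt hBnn
    nlinarith
  calc Real.sqrt (∫ ω, (f ω + g ω) ^ 2 ∂P) ≤ Real.sqrt ((Real.sqrt A + Real.sqrt B) ^ 2) :=
        Real.sqrt_le_sqrt hle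
    _ = |Real.sqrt A + Real.sqrt B| := Real.sqrt_sq_eq_abs _
    _ = Real.sqrt A + Real.sqrt B := abs_of_nonneg (by positivity)

private lemma vckd_kernel_meas {S : Type*} [MeasurableSpace S]
    (κ : ProbabilityTheory.Kernel S S) [ProbabilityTheory.IsMarkovKernel κ]
    {v : S → ℝ} (hv : Measurable v) :
    Measurable fun x => ∫ y, v y ∂(κ x) := by
  have hsm : StronglyMeasurable (Function.uncurry fun (_ : S) (y : S) => v y) :=
    (hv.comp measurable_snd).stronglyMeasurable
  exact (MeasureTheory.StronglyMeasurable.integral_kernel_prod_right (κ := κ) hsm).measurable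

private lemma vckd_clamp_abs (r M : ℝ) (hM : 0 ≤ M) : |max (min r M) (-M)| ≤ |r| := by
  rw [abs_le]
  constructor
  · refine le_max_of_le_left (le_min ?_ ?_)
    · exact neg_abs_le r
    · have := abs_nonneg r; linarith
  · refine max_le (le_trans (min_le_left _ _) (le_abs_self r)) ?_
    have := abs_nonneg r; linarith

private lemma vckd_clamp_tendsto (r : ℝ) :
    Tendsto (fun M : ℕ => max (min r (M : ℝ)) (-(M : ℝ))) atTop (nhds r) := by
  refine tendsto_atTop_of_eventually_const (i₀ := ⌈|r|⌉₊) fun M hM => ?_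
  have h1 : |r| ≤ (M : ℝ) := le_trans (Nat.le_ceil _) (by exact_mod_cast hM)
  rw [abs_le] at h1
  rw [min_eq_left h1.2, max_eq_left (by linarith [h1.1])]

end Helpers



open MeasureTheory Filter Finset

section Main

variable {Ω S : Type*} {m : MeasurableSpace Ω} [MeasurableSpace S]

theorem variance_comparison_kernel_domination'
    (P : Measure Ω) [IsProbabilityMeasure P]
    (ξ : ℕ → Ω → S) (hξ : ∀ k, Measurable (ξ k))
    (Q : ℕ → ProbabilityTheory.Kernel S S) [∀ k, ProbabilityTheory.IsMarkovKernel (Q k)]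
    (hMarkov : ∀ k, 2 ≤ k → ∀ h : S → ℝ, Measurable h → (∀ y, |h y| ≤ 1) →
      P[(fun ω => h (ξ k ω)) |
          ⨆ i ∈ Finset.Icc 1 (k - 1), MeasurableSpace.comap (ξ i) inferInstance]
        =ᵐ[P] fun ω => ∫ y, h y ∂(Q k (ξ (k - 1) ω)))
    (a b : ℝ) (ha : 0 < a) (ha1 : a ≤ 1) (hb1 : 1 ≤ b)
    (hdom : ∀ k, 2 ≤ k → ∃ S' : Set S, MeasurableSet S' ∧
      Measure.map (ξ (k - 1)) P S' = 1 ∧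
      ∀ x ∈ S', ∀ A : Set S, MeasurableSet A →
        a * (Measure.map (ξ k) P A).toReal ≤ (Q k x A).toReal ∧
        (Q k x A).toReal ≤ b * (Measure.map (ξ k) P A).toReal)
    (g : ℕ → S → ℝ) (hgmeas : ∀ k, Measurable (g k))
    (hL2 : ∀ k, MemLp (fun ω => g k (ξ k ω)) 2 P)
    (hcent : ∀ k, ∫ ω, g k (ξ k ω) ∂P = 0) :
    (∀ n : ℕ,
      a / (2 - a) * ∑ j ∈ Finset.Icc 1 n, ∫ ω, g j (ξ j ω) ^ 2 ∂P ≤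
          (∫ ω, (∑ j ∈ Finset.Icc 1 n, g j (ξ j ω)) ^ 2 ∂P) ∧
        (∫ ω, (∑ j ∈ Finset.Icc 1 n, g j (ξ j ω)) ^ 2 ∂P) ≤
          (2 - a) / a * ∑ j ∈ Finset.Icc 1 n, ∫ ω, g j (ξ j ω) ^ 2 ∂P) ∧
    (Tendsto (fun n => ∑ j ∈ Finset.Icc 1 n, ∫ ω, g j (ξ j ω) ^ 2 ∂P) atTop atTop ↔
      Tendsto (fun n => ∫ ω, (∑ j ∈ Finset.Icc 1 n, g j (ξ j ω)) ^ 2 ∂P) atTop atTop) := by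
  classical
  have hb0 : (0:ℝ) < b := lt_of_lt_of_le one_pos hb1
  set T : ℕ → (S → ℝ) → S → ℝ := fun k v x => ∫ y, v y ∂(Q k x) with hTdef
  set Pk : ℕ → Measure S := fun k => Measure.map (ξ k) P with hPkdef
  haveI hPkprob : ∀ k, IsProbabilityMeasure (Pk k) := fun k =>
    Measure.isProbabilityMeasure_map (hξ k).aemeasurable
  have hTmeas : ∀ (k : ℕ) (v : S → ℝ), Measurable v → Measurable (T k v) := fun k v hv =>
    vckd_kernel_meas (Q k) hv
  -- transfer lemmas between P and Pk
  have hmapInt : ∀ (k : ℕ) (v : S → ℝ), Measurable v →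
      (Integrable (fun ω => v (ξ k ω)) P → Integrable v (Pk k)) := by
    intro k v hv hint
    exact (integrable_map_measure hv.aestronglyMeasurable (hξ k).aemeasurable).mpr hint
  have hmapEq : ∀ (k : ℕ) (v : S → ℝ), Measurable v →
      ∫ y, v y ∂(Pk k) = ∫ ω, v (ξ k ω) ∂P := by
    intro k v hv
    exact integral_map (hξ k).aemeasurable hv.aestronglyMeasurable
  have hmapL2 : ∀ (k : ℕ) (v : S → ℝ), Measurable v →
      MemLp (fun ω => v (ξ k ω)) 2 P → MemLp v 2 (Pk k) := by
    intro k v hv h2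
    exact (memLp_map_measure_iff hv.aestronglyMeasurable (hξ k).aemeasurable).mpr h2
  -- domination data
  have hdomC : ∀ k, 2 ≤ k → ∃ S' : Set S, MeasurableSet S' ∧
      (∀ᵐ ω ∂P, ξ (k-1) ω ∈ S') ∧
      (∀ x ∈ S', ENNReal.ofReal a • Pk k ≤ Q k x) ∧
      (∀ x ∈ S', Q k x ≤ ENNReal.ofReal b • Pk k) := by
    intro k hk
    obtain ⟨S', hS'meas, hS'1, hS'dom⟩ := hdom k hk
    refine ⟨S', hS'meas, ?_, ?_, ?_⟩
    · have hpre : MeasurableSet ((ξ (k-1)) ⁻¹' S') := hξ (k-1) hS'meas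
      have h1 : P ((ξ (k-1)) ⁻¹' S') = 1 := by
        rw [← Measure.map_apply (hξ (k-1)) hS'meas]
        exact hS'1
      have h0 : P ((ξ (k-1)) ⁻¹' S')ᶜ = 0 := by
        rw [measure_compl hpre (measure_ne_top _ _), h1, measure_univ, tsub_self]
      exact (MeasureTheory.ae_iff).mpr h0
    · intro x hx
      rw [Measure.le_iff]
      intro s hs
      have hd := (hS'dom x hx s hs).1
      have hfin1 : Pk k s ≠ ⊤ := measure_ne_top _ _
      have hfin2 : Q k x s ≠ ⊤ := measure_ne_top _ _
      rw [Measure.smul_apply, smul_eq_mul]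
      calc ENNReal.ofReal a * Pk k s
          = ENNReal.ofReal (a * (Pk k s).toReal) := by
            rw [ENNReal.ofReal_mul ha.le, ENNReal.ofReal_toReal hfin1]
        _ ≤ ENNReal.ofReal ((Q k x s).toReal) := ENNReal.ofReal_le_ofReal hd
        _ = Q k x s := ENNReal.ofReal_toReal hfin2
    · intro x hx
      rw [Measure.le_iff]
      intro s hs
      have hd := (hS'dom x hx s hs).2
      have hfin1 : Pk k s ≠ ⊤ := measure_ne_top _ _
      have hfin2 : Q k x s ≠ ⊤ := measure_ne_top _ _
      rw [Measure.smul_apply, smul_eq_mul]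
      calc Q k x s = ENNReal.ofReal ((Q k x s).toReal) := (ENNReal.ofReal_toReal hfin2).symm
        _ ≤ ENNReal.ofReal (b * (Pk k s).toReal) := ENNReal.ofReal_le_ofReal hd
        _ = ENNReal.ofReal b * Pk k s := by
            rw [ENNReal.ofReal_mul hb0.le, ENNReal.ofReal_toReal hfin1]
  -- uniform bound on T
  have hTbound : ∀ k, 2 ≤ k → ∀ v : S → ℝ, Measurable v →
      Integrable (fun ω => v (ξ k ω)) P →
      ∀ᵐ ω ∂P, |T k v (ξ (k-1) ω)| ≤ b * ∫ ω', |v (ξ k ω')| ∂P := by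
    intro k hk v hv hint
    obtain ⟨S', hS'meas, hae, hlow, hup⟩ := hdomC k hk
    have hvPk : Integrable v (Pk k) := hmapInt k v hv hint
    have hvb : Integrable v (ENNReal.ofReal b • Pk k) :=
      hvPk.smul_measure ENNReal.ofReal_ne_top
    filter_upwards [hae] with ω hω
    have hvQ : Integrable v (Q k (ξ (k-1) ω)) := hvb.mono_measure (hup _ hω)
    calc |T k v (ξ (k-1) ω)| ≤ ∫ y, |v y| ∂(Q k (ξ (k-1) ω)) := by
          simpa [Real.norm_eq_abs] using
            norm_integral_le_integral_norm (μ := Q k (ξ (k-1) ω)) v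
      _ ≤ ∫ y, |v y| ∂(ENNReal.ofReal b • Pk k) :=
          integral_mono_measure (hup _ hω) (Filter.Eventually.of_forall fun y => abs_nonneg _)
            hvb.abs
      _ = b * ∫ y, |v y| ∂(Pk k) := by
          rw [integral_smul_measure, ENNReal.toReal_ofReal hb0.le, smul_eq_mul]
      _ = b * ∫ ω', |v (ξ k ω')| ∂P := by
          rw [hmapEq k (fun y => |v y|) hv.abs]
  have hTL2 : ∀ k, 2 ≤ k → ∀ v : S → ℝ, Measurable v →
      Integrable (fun ω => v (ξ k ω)) P →
      MemLp (fun ω => T k v (ξ (k-1) ω)) 2 P := by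
    intro k hk v hv hint
    exact vckd_memL2_of_bound
      (((hTmeas k v hv).comp (hξ (k-1))).aestronglyMeasurable)
      (hTbound k hk v hv hint)
  -- bounded × bounded identity
  have hA : ∀ k, 2 ≤ k → ∀ l, 1 ≤ l → l ≤ k - 1 → ∀ (φ v : S → ℝ),
      Measurable φ → Measurable v → ∀ (D C : ℝ), (∀ y, |φ y| ≤ D) → (∀ y, |v y| ≤ C) →
      ∫ ω, φ (ξ l ω) * v (ξ k ω) ∂P = ∫ ω, φ (ξ l ω) * T k v (ξ (k-1) ω) ∂P := by
    intro k hk l hl1 hlk φ v hφ hv D C hφb hvb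
    set G := ⨆ i ∈ Finset.Icc 1 (k - 1), MeasurableSpace.comap (ξ i) inferInstance with hG
    have hGle : G ≤ m := by
      refine iSup_le fun i => iSup_le fun _ => ?_
      exact measurable_iff_comap_le.mp (hξ i)
    haveI : SigmaFinite (P.trim hGle) := inferInstance
    set C' : ℝ := |C| + 1 with hC'
    have hC'pos : (0:ℝ) < C' := by positivity
    set w : Ω → ℝ := fun ω => v (ξ k ω) with hw
    -- conditional expectation of w
    have hm0 := hMarkov k hk (fun y => v y / C') (hv.div_const C') (by
      intro y
      rw [abs_div, abs_of_pos hC'pos, div_le_one hC'pos]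
      calc |v y| ≤ C := hvb y
        _ ≤ |C| := le_abs_self C
        _ ≤ C' := by rw [hC']; linarith)
    have hsm : (fun ω => v (ξ k ω) / C') = C'⁻¹ • w := by
      funext ω
      simp [hw, Pi.smul_apply, smul_eq_mul, div_eq_inv_mul]
    have hsm2 : (fun ω => ∫ y, v y / C' ∂(Q k (ξ (k - 1) ω)))
        = fun ω => C'⁻¹ * T k v (ξ (k-1) ω) := by
      funext ω
      simp only [div_eq_inv_mul]
      rw [integral_const_mul]
    rw [hsm, hsm2] at hm0
    have hsmul := condExp_smul (μ := P) (m := G) (C'⁻¹) w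
    have hCE : P[w|G] =ᵐ[P] fun ω => T k v (ξ (k-1) ω) := by
      filter_upwards [hm0, hsmul] with ω h1 h2
      have h3 : C'⁻¹ * (P[w|G]) ω = C'⁻¹ * T k v (ξ (k-1) ω) := by
        rw [← h1, h2]; simp [Pi.smul_apply, smul_eq_mul]
      exact mul_left_cancel₀ (inv_ne_zero hC'pos.ne') h3
    -- pull-out
    set φl : Ω → ℝ := fun ω => φ (ξ l ω) with hφl
    have hξlG : Measurable[G] (ξ l) := by
      rw [measurable_iff_comap_le, hG]
      exact le_iSup₂ (f := fun i (_ : i ∈ Finset.Icc 1 (k-1)) =>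
        MeasurableSpace.comap (ξ i) inferInstance) l (Finset.mem_Icc.mpr ⟨hl1, hlk⟩)
    have hφlG : StronglyMeasurable[G] φl := (hφ.comp hξlG).stronglyMeasurable
    have hw_int : Integrable w P :=
      vckd_int_of_bound ((hv.comp (hξ k)).aestronglyMeasurable)
        (Filter.Eventually.of_forall fun ω => hvb _)
    have hp_int : Integrable (φl * w) P := by
      have hbnd : ∀ᵐ ω ∂P, |(φl * w) ω| ≤ D * C := by
        refine Filter.Eventually.of_forall fun ω => ?_
        have h1 := hφb (ξ l ω)
        have h2 := hvb (ξ k ω)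
        simp only [Pi.mul_apply, abs_mul]
        exact mul_le_mul h1 h2 (abs_nonneg _) (le_trans (abs_nonneg _) h1)
      exact vckd_int_of_bound
        (((hφ.comp (hξ l)).mul (hv.comp (hξ k))).aestronglyMeasurable) hbnd
    have hmul := condExp_mul_of_stronglyMeasurable_left hφlG hp_int hw_int
    calc ∫ ω, φ (ξ l ω) * v (ξ k ω) ∂P = ∫ ω, (φl * w) ω ∂P := rfl
      _ = ∫ ω, (P[φl * w|G]) ω ∂P := (integral_condExp hGle).symm
      _ = ∫ ω, (φl * P[w|G]) ω ∂P := integral_congr_ae hmul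
      _ = ∫ ω, φ (ξ l ω) * T k v (ξ (k-1) ω) ∂P := by
          refine integral_congr_ae ?_
          filter_upwards [hCE] with ω h1
          simp only [Pi.mul_apply, h1, hφl]
  -- bounded × integrable identity
  have hB : ∀ k, 2 ≤ k → ∀ l, 1 ≤ l → l ≤ k - 1 → ∀ (φ v : S → ℝ),
      Measurable φ → Measurable v → ∀ D : ℝ, 0 ≤ D → (∀ y, |φ y| ≤ D) →
      Integrable (fun ω => v (ξ k ω)) P →
      ∫ ω, φ (ξ l ω) * v (ξ k ω) ∂P = ∫ ω, φ (ξ l ω) * T k v (ξ (k-1) ω) ∂P := by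
    intro k hk l hl1 hlk φ v hφ hv D hD hφb hv1
    obtain ⟨S', hS'meas, hae, hlow, hup⟩ := hdomC k hk
    set vM : ℕ → S → ℝ := fun M y => max (min (v y) (M : ℝ)) (-(M : ℝ)) with hvM
    have hvMmeas : ∀ M, Measurable (vM M) := fun M =>
      (hv.min measurable_const).max measurable_const
    have hvMb : ∀ M : ℕ, ∀ y, |vM M y| ≤ (M : ℝ) := by
      intro M y
      rw [abs_le]
      constructor
      · exact le_max_right _ _
      · exact max_le (le_trans (min_le_right _ _) le_rfl) (neg_le_self (by positivity))
    have hvMabs : ∀ M y, |vM M y| ≤ |v y| := fun M y =>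
      vckd_clamp_abs (v y) (M : ℝ) (by positivity)
    have hvMtend : ∀ y, Tendsto (fun M : ℕ => vM M y) atTop (nhds (v y)) := fun y =>
      vckd_clamp_tendsto (v y)
    have hvMint : ∀ M, Integrable (fun ω => vM M (ξ k ω)) P := by
      intro M
      exact Integrable.mono' hv1.abs ((hvMmeas M).comp (hξ k)).aestronglyMeasurable
        (Filter.Eventually.of_forall fun ω => by
          rw [Real.norm_eq_abs]; exact hvMabs M (ξ k ω))
    -- the identity holds for each truncation
    have hid : ∀ M : ℕ, ∫ ω, φ (ξ l ω) * vM M (ξ k ω) ∂P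
        = ∫ ω, φ (ξ l ω) * T k (vM M) (ξ (k-1) ω) ∂P := fun M =>
      hA k hk l hl1 hlk φ (vM M) hφ (hvMmeas M) D M hφb (hvMb M)
    -- LHS tendsto
    have hL : Tendsto (fun M => ∫ ω, φ (ξ l ω) * vM M (ξ k ω) ∂P) atTop
        (nhds (∫ ω, φ (ξ l ω) * v (ξ k ω) ∂P)) := by
      refine tendsto_integral_of_dominated_convergence
        (fun ω => D * |v (ξ k ω)|)
        (fun M => ((hφ.comp (hξ l)).mul ((hvMmeas M).comp (hξ k))).aestronglyMeasurable)
        (hv1.abs.const_mul D) (fun M => Filter.Eventually.of_forall fun ω => ?_)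
        (Filter.Eventually.of_forall fun ω => ?_)
      · rw [Real.norm_eq_abs, abs_mul]
        exact mul_le_mul (hφb _) (hvMabs M _) (abs_nonneg _) hD
      · exact (hvMtend (ξ k ω)).const_mul _
    -- RHS tendsto
    have hvPk : Integrable v (Pk k) := hmapInt k v hv hv1
    have hvb' : Integrable v (ENNReal.ofReal b • Pk k) :=
      hvPk.smul_measure ENNReal.ofReal_ne_top
    have hR : Tendsto (fun M => ∫ ω, φ (ξ l ω) * T k (vM M) (ξ (k-1) ω) ∂P) atTop
        (nhds (∫ ω, φ (ξ l ω) * T k v (ξ (k-1) ω) ∂P)) := by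
      refine tendsto_integral_of_dominated_convergence
        (fun _ => D * (b * ∫ ω', |v (ξ k ω')| ∂P))
        (fun M => ((hφ.comp (hξ l)).mul
          ((hTmeas k (vM M) (hvMmeas M)).comp (hξ (k-1)))).aestronglyMeasurable)
        (integrable_const _) (fun M => ?_) ?_
      · have hTb := hTbound k hk (vM M) (hvMmeas M) (hvMint M)
        filter_upwards [hTb] with ω hω
        rw [Real.norm_eq_abs, abs_mul]
        refine mul_le_mul (hφb _) (le_trans hω ?_) (abs_nonneg _) hD
        refine mul_le_mul_of_nonneg_left ?_ hb0.le
        refine integral_mono (hvMint M).abs hv1.abs fun ω' => ?_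
        exact hvMabs M (ξ k ω')
      · filter_upwards [hae] with ω hω
        refine Tendsto.const_mul _ ?_
        have hvQ : Integrable v (Q k (ξ (k-1) ω)) := hvb'.mono_measure (hup _ hω)
        refine tendsto_integral_of_dominated_convergence (fun y => |v y|)
          (fun M => (hvMmeas M).aestronglyMeasurable) hvQ.abs
          (fun M => Filter.Eventually.of_forall fun y => ?_)
          (Filter.Eventually.of_forall fun y => hvMtend y)
        rw [Real.norm_eq_abs]
        exact hvMabs M y
    have := hL
    rw [Filter.tendsto_congr hid] at this
    exact tendsto_nhds_unique this hR
  -- marginal identity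
  have hMarg : ∀ k, 2 ≤ k → ∀ v : S → ℝ, Measurable v →
      Integrable (fun ω => v (ξ k ω)) P →
      ∫ ω, T k v (ξ (k-1) ω) ∂P = ∫ ω, v (ξ k ω) ∂P := by
    intro k hk v hv hint
    have := hB k hk (k-1) (by omega) le_rfl (fun _ => 1) v measurable_const hv 1
      zero_le_one (fun y => by norm_num) hint
    simpa using this.symm
  -- L² × L² identity
  have hC : ∀ k, 2 ≤ k → ∀ l, 1 ≤ l → l ≤ k - 1 → ∀ (u v : S → ℝ),
      Measurable u → Measurable v →
      MemLp (fun ω => u (ξ l ω)) 2 P → MemLp (fun ω => v (ξ k ω)) 2 P →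
      ∫ ω, u (ξ l ω) * v (ξ k ω) ∂P = ∫ ω, u (ξ l ω) * T k v (ξ (k-1) ω) ∂P := by
    intro k hk l hl1 hlk u v hu hv hu2 hv2
    have hv1 : Integrable (fun ω => v (ξ k ω)) P := hv2.integrable one_le_two
    set uM : ℕ → S → ℝ := fun M y => max (min (u y) (M : ℝ)) (-(M : ℝ)) with huM
    have huMmeas : ∀ M, Measurable (uM M) := fun M =>
      (hu.min measurable_const).max measurable_const
    have huMb : ∀ M : ℕ, ∀ y, |uM M y| ≤ (M : ℝ) := by
      intro M y
      rw [abs_le]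
      exact ⟨le_max_right _ _,
        max_le (le_trans (min_le_right _ _) le_rfl) (neg_le_self (by positivity))⟩
    have huMabs : ∀ M y, |uM M y| ≤ |u y| := fun M y =>
      vckd_clamp_abs (u y) (M : ℝ) (by positivity)
    have huMtend : ∀ y, Tendsto (fun M : ℕ => uM M y) atTop (nhds (u y)) := fun y =>
      vckd_clamp_tendsto (u y)
    have hid : ∀ M : ℕ, ∫ ω, uM M (ξ l ω) * v (ξ k ω) ∂P
        = ∫ ω, uM M (ξ l ω) * T k v (ξ (k-1) ω) ∂P := fun M =>
      hB k hk l hl1 hlk (uM M) v (huMmeas M) hv M (by positivity) (huMb M) hv1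
    have hTv2 : MemLp (fun ω => T k v (ξ (k-1) ω)) 2 P := hTL2 k hk v hv hv1
    have hL : Tendsto (fun M => ∫ ω, uM M (ξ l ω) * v (ξ k ω) ∂P) atTop
        (nhds (∫ ω, u (ξ l ω) * v (ξ k ω) ∂P)) := by
      refine tendsto_integral_of_dominated_convergence
        (fun ω => |u (ξ l ω)| * |v (ξ k ω)|)
        (fun M => (((huMmeas M).comp (hξ l)).mul (hv.comp (hξ k))).aestronglyMeasurable)
        ?_ (fun M => Filter.Eventually.of_forall fun ω => ?_)
        (Filter.Eventually.of_forall fun ω => ?_)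
      · have := (vckd_int_mul hu2 hv2).abs
        refine this.congr (Filter.Eventually.of_forall fun ω => ?_)
        simp [abs_mul]
      · rw [Real.norm_eq_abs, abs_mul]
        exact mul_le_mul_of_nonneg_right (huMabs M _) (abs_nonneg _)
      · exact (huMtend (ξ l ω)).mul_const _
    have hR : Tendsto (fun M => ∫ ω, uM M (ξ l ω) * T k v (ξ (k-1) ω) ∂P) atTop
        (nhds (∫ ω, u (ξ l ω) * T k v (ξ (k-1) ω) ∂P)) := by
      refine tendsto_integral_of_dominated_convergence
        (fun ω => |u (ξ l ω)| * |T k v (ξ (k-1) ω)|)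
        (fun M => (((huMmeas M).comp (hξ l)).mul
          ((hTmeas k v hv).comp (hξ (k-1)))).aestronglyMeasurable)
        ?_ (fun M => Filter.Eventually.of_forall fun ω => ?_)
        (Filter.Eventually.of_forall fun ω => ?_)
      · have := (vckd_int_mul hu2 hTv2).abs
        refine this.congr (Filter.Eventually.of_forall fun ω => ?_)
        simp [abs_mul]
      · rw [Real.norm_eq_abs, abs_mul]
        exact mul_le_mul_of_nonneg_right (huMabs M _) (abs_nonneg _)
      · exact (huMtend (ξ l ω)).mul_const _
    have := hL
    rw [Filter.tendsto_congr hid] at this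
    exact tendsto_nhds_unique this hR
  -- centered L² contraction
  have hJensen : ∀ k, 2 ≤ k → ∀ v : S → ℝ, Measurable v →
      MemLp (fun ω => v (ξ k ω)) 2 P → (∫ ω, v (ξ k ω) ∂P = 0) →
      ∫ ω, (T k v (ξ (k-1) ω)) ^ 2 ∂P ≤ (1-a) ^ 2 * ∫ ω, (v (ξ k ω)) ^ 2 ∂P := by
    intro k hk v hv hv2 hvc
    obtain ⟨S', hS'meas, hae, hlow, hup⟩ := hdomC k hk
    set v2 : S → ℝ := fun y => v y ^ 2 with hv2def
    have hv2meas : Measurable v2 := hv.pow_const 2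
    have hv1 : Integrable (fun ω => v (ξ k ω)) P := hv2.integrable one_le_two
    have hv2int : Integrable (fun ω => v2 (ξ k ω)) P := hv2.integrable_sq
    set I2 : ℝ := ∫ ω, (v (ξ k ω)) ^ 2 ∂P with hI2
    have hI2nn : 0 ≤ I2 := integral_nonneg fun ω => sq_nonneg _
    have hvPk : Integrable v (Pk k) := hmapInt k v hv hv1
    have hv2Pk : Integrable v2 (Pk k) := hmapInt k v2 hv2meas hv2int
    have hvPk0 : ∫ y, v y ∂(Pk k) = 0 := by rw [hmapEq k v hv]; exact hvc
    have hv2PkI : ∫ y, v2 y ∂(Pk k) = I2 := by rw [hmapEq k v2 hv2meas]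
    have hvb' : Integrable v (ENNReal.ofReal b • Pk k) :=
      hvPk.smul_measure ENNReal.ofReal_ne_top
    have hv2b' : Integrable v2 (ENNReal.ofReal b • Pk k) :=
      hv2Pk.smul_measure ENNReal.ofReal_ne_top
    haveI hfinsmul : IsFiniteMeasure (ENNReal.ofReal a • Pk k) := by
      constructor
      rw [Measure.smul_apply, smul_eq_mul, measure_univ, mul_one]
      exact ENNReal.ofReal_lt_top
    -- pointwise bound
    have hptw : ∀ x ∈ S', (T k v x) ^ 2 ≤ (1-a) * (T k v2 x - a * I2) := by
      intro x hx
      have hle : ENNReal.ofReal a • Pk k ≤ Q k x := hlow x hx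
      set ν : Measure S := Q k x - ENNReal.ofReal a • Pk k with hν
      have hsum : ν + ENNReal.ofReal a • Pk k = Q k x := Measure.sub_add_cancel_of_le hle
      have hνle : ν ≤ Q k x := Measure.sub_le
      haveI : IsFiniteMeasure (Q k x) := inferInstance
      haveI hνfin : IsFiniteMeasure ν := by
        constructor
        exact lt_of_le_of_lt (hνle Set.univ) (measure_lt_top _ _)
      have hvQ : Integrable v (Q k x) := hvb'.mono_measure (hup x hx)
      have hv2Q : Integrable v2 (Q k x) := hv2b'.mono_measure (hup x hx)
      have hvν : Integrable v ν := hvQ.mono_measure hνle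
      have hv2ν : Integrable v2 ν := hv2Q.mono_measure hνle
      have hva : Integrable v (ENNReal.ofReal a • Pk k) :=
        hvPk.smul_measure ENNReal.ofReal_ne_top
      have hv2a : Integrable v2 (ENNReal.ofReal a • Pk k) :=
        hv2Pk.smul_measure ENNReal.ofReal_ne_top
      have hTv : T k v x = ∫ y, v y ∂ν := by
        have : T k v x = ∫ y, v y ∂(ν + ENNReal.ofReal a • Pk k) := by rw [hsum]
        rw [this, integral_add_measure hvν hva, integral_smul_measure,
          ENNReal.toReal_ofReal ha.le, hvPk0]
        simp
      have hTv2x : T k v2 x = (∫ y, v2 y ∂ν) + a * I2 := by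
        have : T k v2 x = ∫ y, v2 y ∂(ν + ENNReal.ofReal a • Pk k) := by rw [hsum]
        rw [this, integral_add_measure hv2ν hv2a, integral_smul_measure,
          ENNReal.toReal_ofReal ha.le, hv2PkI]
        simp
      have ht : (ν Set.univ).toReal = 1 - a := by
        rw [hν, Measure.sub_apply MeasurableSet.univ hle]
        rw [measure_univ, Measure.smul_apply, smul_eq_mul, measure_univ, mul_one]
        rw [← ENNReal.ofReal_one, ← ENNReal.ofReal_sub _ ha.le,
          ENNReal.toReal_ofReal (by linarith)]
      set c : ℝ := ∫ y, v y ∂ν with hc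
      set t : ℝ := (ν Set.univ).toReal with htdef
      have hCS : c ^ 2 ≤ t * ∫ y, v2 y ∂ν := by
        rcases eq_or_lt_of_le (ENNReal.toReal_nonneg : (0:ℝ) ≤ (ν Set.univ).toReal)
          with h0 | hpos
        · -- t = 0 : ν = 0
          have hν0 : ν = 0 := by
            have : ν Set.univ = 0 := by
              have hne : ν Set.univ ≠ ⊤ := measure_ne_top _ _
              rcases (ENNReal.toReal_eq_zero_iff _).mp h0.symm with h | h
              · exact h
              · exact absurd h hne
            exact Measure.measure_univ_eq_zero.mp this
          have hc0 : c = 0 := by rw [hc, hν0, integral_zero_measure]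
          have ht0 : t = 0 := by rw [htdef, ← h0]
          rw [hc0, ht0]
          simp
        · have hexp : ∫ y, (t * v y - c) ^ 2 ∂ν
              = t ^ 2 * (∫ y, v2 y ∂ν) - 2 * t * c * c + c ^ 2 * t := by
            have hptw2 : ∀ y, (t * v y - c) ^ 2
                = t ^ 2 * v2 y - (2 * t * c) * v y + c ^ 2 := by
              intro y; rw [hv2def]; ring
            rw [integral_congr_ae (Filter.Eventually.of_forall hptw2)]
            have i1 : Integrable (fun y => t ^ 2 * v2 y) ν := hv2ν.const_mul _
            have i2 : Integrable (fun y => (2 * t * c) * v y) ν := hvν.const_mul _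
            have i12 : Integrable (fun y => t ^ 2 * v2 y - (2 * t * c) * v y) ν := i1.sub i2
            rw [integral_add i12 (integrable_const _), integral_sub i1 i2,
              integral_const_mul, integral_const_mul, integral_const]
            rw [← hc, measureReal_def, ← htdef]
            simp [smul_eq_mul]
            ring
          have h0' : 0 ≤ ∫ y, (t * v y - c) ^ 2 ∂ν := integral_nonneg fun y => sq_nonneg _
          rw [hexp] at h0'
          have hfact : 0 ≤ t * (t * (∫ y, v2 y ∂ν) - c ^ 2) := by nlinarith
          rw [← htdef] at hpos
          nlinarith [hfact, hpos]
      have hν2nn : 0 ≤ ∫ y, v2 y ∂ν := integral_nonneg fun y => sq_nonneg _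
      calc (T k v x) ^ 2 = c ^ 2 := by rw [hTv]
        _ ≤ t * ∫ y, v2 y ∂ν := hCS
        _ = (1 - a) * ∫ y, v2 y ∂ν := by rw [ht]
        _ = (1 - a) * (T k v2 x - a * I2) := by rw [hTv2x]; ring
    -- integrate the pointwise bound
    have hTb := hTbound k hk v hv hv1
    have hTb2 := hTbound k hk v2 hv2meas hv2int
    set K : ℝ := b * ∫ ω', |v (ξ k ω')| ∂P with hK
    have hKnn : 0 ≤ K := mul_nonneg hb0.le (integral_nonneg fun ω => abs_nonneg _)
    set K2 : ℝ := b * ∫ ω', |v2 (ξ k ω')| ∂P with hK2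
    have iL : Integrable (fun ω => (T k v (ξ (k-1) ω)) ^ 2) P := by
      refine vckd_int_of_bound (C := K ^ 2)
        ((((hTmeas k v hv).comp (hξ (k-1))).pow_const 2).aestronglyMeasurable) ?_
      filter_upwards [hTb] with ω hω
      rw [abs_pow]
      nlinarith [abs_nonneg (T k v (ξ (k-1) ω)), hω, hKnn]
    have iTv2 : Integrable (fun ω => T k v2 (ξ (k-1) ω)) P := by
      refine vckd_int_of_bound
        (((hTmeas k v2 hv2meas).comp (hξ (k-1))).aestronglyMeasurable) hTb2
    have iR : Integrable (fun ω => (1-a) * (T k v2 (ξ (k-1) ω) - a * I2)) P :=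
      ((iTv2.sub (integrable_const _)).const_mul _)
    have hae2 : ∀ᵐ ω ∂P, (T k v (ξ (k-1) ω)) ^ 2
        ≤ (1-a) * (T k v2 (ξ (k-1) ω) - a * I2) := by
      filter_upwards [hae] with ω hω
      exact hptw _ hω
    have hint := integral_mono_ae iL iR hae2
    have hMargv2 : ∫ ω, T k v2 (ξ (k-1) ω) ∂P = I2 :=
      (hMarg k hk v2 hv2meas hv2int)
    rw [integral_const_mul, integral_sub iTv2 (integrable_const _), hMargv2,
      integral_const] at hint
    simp only [measureReal_def, measure_univ, ENNReal.toReal_one, smul_eq_mul, one_mul] at hint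
    calc ∫ ω, (T k v (ξ (k-1) ω)) ^ 2 ∂P ≤ (1-a) * (I2 - a * I2) := hint
      _ = (1-a) ^ 2 * I2 := by ring
  -- main per-n bounds
  have key : ∀ n : ℕ,
      a / (2 - a) * ∑ j ∈ Finset.Icc 1 n, ∫ ω, g j (ξ j ω) ^ 2 ∂P ≤
          (∫ ω, (∑ j ∈ Finset.Icc 1 n, g j (ξ j ω)) ^ 2 ∂P) ∧
        (∫ ω, (∑ j ∈ Finset.Icc 1 n, g j (ξ j ω)) ^ 2 ∂P) ≤
          (2 - a) / a * ∑ j ∈ Finset.Icc 1 n, ∫ ω, g j (ξ j ω) ^ 2 ∂P := by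
    intro n
    -- backward recursion for the functions f i
    set F : ℕ → S → ℝ := fun m => Nat.rec (motive := fun _ => S → ℝ) (fun _ => (0:ℝ))
      (fun m' Fm' x => g (n - m') x + T (n - m' + 1) Fm' x) m with hFdef
    set f : ℕ → S → ℝ := fun i => F (n + 1 - i) with hfdef
    have hFrec : ∀ m', F (m' + 1) = fun x => g (n - m') x + T (n - m' + 1) (F m') x :=
      fun m' => rfl
    have hf0 : f (n + 1) = fun _ => (0:ℝ) := by
      have h : n + 1 - (n + 1) = 0 := Nat.sub_self _
      show F (n + 1 - (n + 1)) = _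
      rw [h]
      exact rfl
    have hfrec : ∀ i, 1 ≤ i → i ≤ n →
        f i = fun x => g i x + T (i + 1) (f (i + 1)) x := by
      intro i h1 h2
      have e1 : n + 1 - i = (n - i) + 1 := by omega
      have e3 : n + 1 - (i + 1) = n - i := by omega
      show F (n + 1 - i) = fun x => g i x + T (i + 1) (F (n + 1 - (i + 1))) x
      rw [e1, e3, hFrec (n - i)]
      have e2 : n - (n - i) = i := by omega
      rw [e2]
    -- main downward induction
    have mainInd : ∀ d i, i + d = n + 1 → 1 ≤ i →
        Measurable (f i) ∧ MemLp (fun ω => f i (ξ i ω)) 2 P ∧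
          (∫ ω, f i (ξ i ω) ∂P = 0) ∧
          (∀ l, 1 ≤ l → l ≤ i - 1 → ∀ u : S → ℝ, Measurable u →
            MemLp (fun ω => u (ξ l ω)) 2 P →
            ∫ ω, u (ξ l ω) * (∑ j ∈ Finset.Icc i n, g j (ξ j ω)) ∂P
              = ∫ ω, u (ξ l ω) * T i (f i) (ξ (i-1) ω) ∂P) := by
      intro d
      induction d with
      | zero =>
        intro i hi hile
        obtain rfl : i = n + 1 := by omega
        refine ⟨?_, ?_, ?_, ?_⟩
        · rw [hf0]; exact measurable_const
        · rw [hf0]; exact memLp_const 0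
        · rw [hf0]; simp
        · intro l hl1 hlk u hu hu2
          have hempty : Finset.Icc (n+1) n = ∅ := Finset.Icc_eq_empty (by omega)
          have hTz : T (n+1) (f (n+1)) = fun _ => (0:ℝ) := by
            rw [hf0]
            funext x
            show ∫ (_ : S), (0:ℝ) ∂(Q (n+1) x) = 0
            exact integral_zero _ _
          rw [hempty, hTz]
          simp
      | succ d ih =>
        intro i hi h1
        have hin : i ≤ n := by omega
        obtain ⟨ihMeas, ihL2, ihCent, ihD⟩ := ih (i+1) (by omega) (by omega)
        have hfeq' : ∀ x, f i x = g i x + T (i+1) (f (i+1)) x := fun x => by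
          rw [hfrec i h1 hin]
        have hZmeas : Measurable (T (i+1) (f (i+1))) := hTmeas _ _ ihMeas
        have hZint1 : Integrable (fun ω => f (i+1) (ξ (i+1) ω)) P :=
          ihL2.integrable one_le_two
        have hZL2 : MemLp (fun ω => T (i+1) (f (i+1)) (ξ i ω)) 2 P :=
          hTL2 (i+1) (by omega) (f (i+1)) ihMeas hZint1
        have hfim : Measurable (f i) := by
          rw [hfrec i h1 hin]; exact (hgmeas i).add hZmeas
        have hfiL2 : MemLp (fun ω => f i (ξ i ω)) 2 P := by
          have h2 : MemLp (fun ω => g i (ξ i ω) + T (i+1) (f (i+1)) (ξ i ω)) 2 P :=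
            (hL2 i).add hZL2
          exact h2.ae_eq (Filter.Eventually.of_forall fun ω => (hfeq' (ξ i ω)).symm)
        have hMargT : ∫ ω, T (i+1) (f (i+1)) (ξ i ω) ∂P
            = ∫ ω, f (i+1) (ξ (i+1) ω) ∂P :=
          hMarg (i+1) (by omega) (f (i+1)) ihMeas hZint1
        have hficent : ∫ ω, f i (ξ i ω) ∂P = 0 := by
          rw [integral_congr_ae (Filter.Eventually.of_forall fun ω => hfeq' (ξ i ω))]
          rw [integral_add ((hL2 i).integrable one_le_two) (hZL2.integrable one_le_two)]
          rw [hcent i, hMargT, ihCent]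
          simp
        refine ⟨hfim, hfiL2, hficent, ?_⟩
        intro l hl1 hli u hu hu2
        have hi2 : 2 ≤ i := by omega
        have hsplit : Finset.Icc i n = insert i (Finset.Icc (i+1) n) := by
          ext x; simp only [Finset.mem_Icc, Finset.mem_insert]; omega
        have hnotmem : i ∉ Finset.Icc (i+1) n := by simp [Finset.mem_Icc]
        have hRL2 : MemLp (fun ω => ∑ j ∈ Finset.Icc (i+1) n, g j (ξ j ω)) 2 P :=
          memLp_finset_sum _ fun j _ => hL2 j
        have iuX : Integrable (fun ω => u (ξ l ω) * g i (ξ i ω)) P :=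
          vckd_int_mul hu2 (hL2 i)
        have iuR : Integrable
            (fun ω => u (ξ l ω) * ∑ j ∈ Finset.Icc (i+1) n, g j (ξ j ω)) P :=
          vckd_int_mul hu2 hRL2
        have e1 : ∫ ω, u (ξ l ω) * (∑ j ∈ Finset.Icc i n, g j (ξ j ω)) ∂P
            = ∫ ω, (u (ξ l ω) * g i (ξ i ω)
              + u (ξ l ω) * ∑ j ∈ Finset.Icc (i+1) n, g j (ξ j ω)) ∂P := by
          refine integral_congr_ae (Filter.Eventually.of_forall fun ω => ?_)
          dsimp only
          rw [hsplit, Finset.sum_insert hnotmem, mul_add]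
        rw [e1, integral_add iuX iuR]
        have e2 := ihD l hl1 (by omega) u hu hu2
        simp only [Nat.add_sub_cancel] at e2
        rw [e2]
        have iuZ : Integrable (fun ω => u (ξ l ω) * T (i+1) (f (i+1)) (ξ i ω)) P :=
          vckd_int_mul hu2 hZL2
        rw [← integral_add iuX iuZ]
        have e3 : ∫ ω, (u (ξ l ω) * g i (ξ i ω)
              + u (ξ l ω) * T (i+1) (f (i+1)) (ξ i ω)) ∂P
            = ∫ ω, u (ξ l ω) * f i (ξ i ω) ∂P := by
          refine integral_congr_ae (Filter.Eventually.of_forall fun ω => ?_)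
          dsimp only
          rw [hfeq' (ξ i ω)]; ring
        rw [e3]
        exact hC i hi2 l hl1 (by omega) u (f i) hu hfim hu2 hfiL2
    have hprops : ∀ i, 1 ≤ i → i ≤ n + 1 →
        Measurable (f i) ∧ MemLp (fun ω => f i (ξ i ω)) 2 P ∧
          ∫ ω, f i (ξ i ω) ∂P = 0 := by
      intro i h1 h2
      obtain ⟨h3, h4, h5, _⟩ := mainInd (n + 1 - i) i (by omega) h1
      exact ⟨h3, h4, h5⟩
    -- variance decomposition
    have sqid : ∀ d i, i + d = n + 1 → 1 ≤ i →
        ∫ ω, (∑ j ∈ Finset.Icc i n, g j (ξ j ω)) ^ 2 ∂P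
          = ∑ j ∈ Finset.Icc i n, ((∫ ω, (f j (ξ j ω)) ^ 2 ∂P)
              - ∫ ω, (T (j+1) (f (j+1)) (ξ j ω)) ^ 2 ∂P) := by
      intro d
      induction d with
      | zero =>
        intro i hi h1
        obtain rfl : i = n + 1 := by omega
        rw [Finset.Icc_eq_empty (by omega : ¬ n + 1 ≤ n)]
        simp
      | succ d ih =>
        intro i hi h1
        have hin : i ≤ n := by omega
        obtain ⟨him, hiL2, hicent⟩ := hprops i h1 (by omega)
        obtain ⟨him1, hi1L2, hi1cent⟩ := hprops (i+1) (by omega) (by omega)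
        have hZint1 : Integrable (fun ω => f (i+1) (ξ (i+1) ω)) P :=
          hi1L2.integrable one_le_two
        have hZL2 : MemLp (fun ω => T (i+1) (f (i+1)) (ξ i ω)) 2 P :=
          hTL2 (i+1) (by omega) _ him1 hZint1
        have hfeq' : ∀ x, f i x = g i x + T (i+1) (f (i+1)) x := fun x => by
          rw [hfrec i h1 hin]
        have hsplit : Finset.Icc i n = insert i (Finset.Icc (i+1) n) := by
          ext x; simp only [Finset.mem_Icc, Finset.mem_insert]; omega
        have hnotmem : i ∉ Finset.Icc (i+1) n := by simp [Finset.mem_Icc]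
        have hRL2 : MemLp (fun ω => ∑ j ∈ Finset.Icc (i+1) n, g j (ξ j ω)) 2 P :=
          memLp_finset_sum _ fun j _ => hL2 j
        obtain ⟨_, _, _, ihD⟩ := mainInd d (i+1) (by omega) (by omega)
        have hcross := ihD i h1 (by omega) (g i) (hgmeas i) (hL2 i)
        have hX2 : Integrable (fun ω => (g i (ξ i ω)) ^ 2) P := (hL2 i).integrable_sq
        have hXR : Integrable
            (fun ω => g i (ξ i ω) * ∑ j ∈ Finset.Icc (i+1) n, g j (ξ j ω)) P :=
          vckd_int_mul (hL2 i) hRL2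
        have hR2 : Integrable
            (fun ω => (∑ j ∈ Finset.Icc (i+1) n, g j (ξ j ω)) ^ 2) P :=
          hRL2.integrable_sq
        have hXZ : Integrable
            (fun ω => g i (ξ i ω) * T (i+1) (f (i+1)) (ξ i ω)) P :=
          vckd_int_mul (hL2 i) hZL2
        have hZ2 : Integrable (fun ω => (T (i+1) (f (i+1)) (ξ i ω)) ^ 2) P :=
          hZL2.integrable_sq
        -- expand the square of the full sum
        have e1 : ∫ ω, (∑ j ∈ Finset.Icc i n, g j (ξ j ω)) ^ 2 ∂P
            = (∫ ω, (g i (ξ i ω)) ^ 2 ∂P)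
              + 2 * (∫ ω, g i (ξ i ω) * ∑ j ∈ Finset.Icc (i+1) n, g j (ξ j ω) ∂P)
              + ∫ ω, (∑ j ∈ Finset.Icc (i+1) n, g j (ξ j ω)) ^ 2 ∂P := by
          have hpt : ∀ ω, (∑ j ∈ Finset.Icc i n, g j (ξ j ω)) ^ 2
              = (g i (ξ i ω)) ^ 2
                + (2 : ℝ) * (g i (ξ i ω) * ∑ j ∈ Finset.Icc (i+1) n, g j (ξ j ω))
                + (∑ j ∈ Finset.Icc (i+1) n, g j (ξ j ω)) ^ 2 := by
            intro ω
            rw [hsplit, Finset.sum_insert hnotmem]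
            ring
          rw [integral_congr_ae (Filter.Eventually.of_forall hpt)]
          have i2' : Integrable
              (fun ω => (2:ℝ) * (g i (ξ i ω) * ∑ j ∈ Finset.Icc (i+1) n, g j (ξ j ω))) P :=
            hXR.const_mul 2
          have i12' : Integrable (fun ω => (g i (ξ i ω)) ^ 2
              + (2:ℝ) * (g i (ξ i ω) * ∑ j ∈ Finset.Icc (i+1) n, g j (ξ j ω))) P :=
            hX2.add i2'
          rw [integral_add i12' hR2, integral_add hX2 i2', integral_const_mul]
        -- expand the square of f i
        have e4 : ∫ ω, (f i (ξ i ω)) ^ 2 ∂P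
            = (∫ ω, (g i (ξ i ω)) ^ 2 ∂P)
              + 2 * (∫ ω, g i (ξ i ω) * T (i+1) (f (i+1)) (ξ i ω) ∂P)
              + ∫ ω, (T (i+1) (f (i+1)) (ξ i ω)) ^ 2 ∂P := by
          have hpt : ∀ ω, (f i (ξ i ω)) ^ 2
              = (g i (ξ i ω)) ^ 2
                + (2 : ℝ) * (g i (ξ i ω) * T (i+1) (f (i+1)) (ξ i ω))
                + (T (i+1) (f (i+1)) (ξ i ω)) ^ 2 := by
            intro ω
            rw [hfeq' (ξ i ω)]
            ring
          rw [integral_congr_ae (Filter.Eventually.of_forall hpt)]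
          have i2' : Integrable
              (fun ω => (2:ℝ) * (g i (ξ i ω) * T (i+1) (f (i+1)) (ξ i ω))) P :=
            hXZ.const_mul 2
          have i12' : Integrable (fun ω => (g i (ξ i ω)) ^ 2
              + (2:ℝ) * (g i (ξ i ω) * T (i+1) (f (i+1)) (ξ i ω))) P :=
            hX2.add i2'
          rw [integral_add i12' hZ2, integral_add hX2 i2', integral_const_mul]
        have e5 := ih (i+1) (by omega) (by omega)
        simp only [Nat.add_sub_cancel] at hcross
        rw [e1, hcross, hsplit, Finset.sum_insert hnotmem, ← e5, e4]
        ring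
    -- numeric wrap-up
    set ee : ℕ → ℝ := fun j => ∫ ω, (g j (ξ j ω)) ^ 2 ∂P with heedef
    set yy : ℕ → ℝ := fun j => ∫ ω, (f j (ξ j ω)) ^ 2 ∂P with hyydef
    set zz : ℕ → ℝ := fun j => ∫ ω, (T (j+1) (f (j+1)) (ξ j ω)) ^ 2 ∂P with hzzdef
    have heenn : ∀ j, 0 ≤ ee j := fun j => integral_nonneg fun ω => sq_nonneg _
    have hyynn : ∀ j, 0 ≤ yy j := fun j => integral_nonneg fun ω => sq_nonneg _
    have hzznn : ∀ j, 0 ≤ zz j := fun j => integral_nonneg fun ω => sq_nonneg _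
    have hyn1 : yy (n + 1) = 0 := by
      rw [hyydef]
      simp only [hf0]
      simp
    have hZdata : ∀ j, 1 ≤ j → j ≤ n →
        MemLp (fun ω => T (j+1) (f (j+1)) (ξ j ω)) 2 P := by
      intro j h1 h2
      obtain ⟨hm', hl2', _⟩ := hprops (j+1) (by omega) (by omega)
      exact hTL2 (j+1) (by omega) _ hm' (hl2'.integrable one_le_two)
    have hfL2' : ∀ j, 1 ≤ j → j ≤ n → MemLp (fun ω => f j (ξ j ω)) 2 P := fun j h1 h2 =>
      (hprops j h1 (by omega)).2.1
    have hzyy : ∀ j ∈ Finset.Icc 1 n, zz j ≤ (1-a) ^ 2 * yy (j+1) := by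
      intro j hj
      obtain ⟨hj1, hjn⟩ := Finset.mem_Icc.mp hj
      obtain ⟨hm', hl2', hc'⟩ := hprops (j+1) (by omega) (by omega)
      exact hJensen (j+1) (by omega) (f (j+1)) hm' hl2' hc'
    have hmink1 : ∀ j ∈ Finset.Icc 1 n,
        Real.sqrt (yy j) ≤ Real.sqrt (ee j) + Real.sqrt (zz j) := by
      intro j hj
      obtain ⟨hj1, hjn⟩ := Finset.mem_Icc.mp hj
      have hfeq' : ∀ x, f j x = g j x + T (j+1) (f (j+1)) x := fun x => by
        rw [hfrec j hj1 hjn]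
      have := vckd_minkowski (hL2 j) (hZdata j hj1 hjn)
      have hcongr : ∫ ω, (g j (ξ j ω) + T (j+1) (f (j+1)) (ξ j ω)) ^ 2 ∂P = yy j := by
        refine integral_congr_ae (Filter.Eventually.of_forall fun ω => ?_)
        dsimp only
        rw [hfeq' (ξ j ω)]
      rw [hcongr] at this
      exact this
    have hmink2 : ∀ j ∈ Finset.Icc 1 n,
        Real.sqrt (ee j) ≤ Real.sqrt (yy j) + Real.sqrt (zz j) := by
      intro j hj
      obtain ⟨hj1, hjn⟩ := Finset.mem_Icc.mp hj
      have hfeq' : ∀ x, f j x = g j x + T (j+1) (f (j+1)) x := fun x => by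
        rw [hfrec j hj1 hjn]
      have hnegL2 : MemLp (fun ω => -(T (j+1) (f (j+1)) (ξ j ω))) 2 P :=
        (hZdata j hj1 hjn).neg
      have := vckd_minkowski (hfL2' j hj1 hjn) hnegL2
      have hcongr : ∫ ω, (f j (ξ j ω) + -(T (j+1) (f (j+1)) (ξ j ω))) ^ 2 ∂P = ee j := by
        refine integral_congr_ae (Filter.Eventually.of_forall fun ω => ?_)
        dsimp only
        rw [hfeq' (ξ j ω)]
        ring
      have hcongr2 : ∫ ω, (-(T (j+1) (f (j+1)) (ξ j ω))) ^ 2 ∂P = zz j := by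
        refine integral_congr_ae (Filter.Eventually.of_forall fun ω => ?_)
        dsimp only
        ring
      rw [hcongr, hcongr2] at this
      exact this
    have hvu' : ∀ j ∈ Finset.Icc 1 n,
        Real.sqrt (zz j) ≤ (1-a) * Real.sqrt (yy (j+1)) := by
      intro j hj
      have h := hzyy j hj
      calc Real.sqrt (zz j) ≤ Real.sqrt ((1-a) ^ 2 * yy (j+1)) := Real.sqrt_le_sqrt h
        _ = (1-a) * Real.sqrt (yy (j+1)) := by
            rw [Real.sqrt_mul (sq_nonneg _), Real.sqrt_sq (by linarith)]
    have hnum := vckd_numeric (ρ := 1 - a) (by linarith) (by linarith) n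
      (fun j => Real.sqrt (yy j)) (fun j => Real.sqrt (zz j)) (fun j => Real.sqrt (ee j))
      (fun j => Real.sqrt_nonneg _) (fun j => Real.sqrt_nonneg _)
      (fun j => Real.sqrt_nonneg _)
      (by rw [hyn1]; exact Real.sqrt_zero)
      hvu' hmink1 hmink2
    have hsq1 : ∑ j ∈ Finset.Icc 1 n,
        (Real.sqrt (yy j) ^ 2 - Real.sqrt (zz j) ^ 2) = ∑ j ∈ Finset.Icc 1 n, (yy j - zz j) := by
      refine Finset.sum_congr rfl fun j _ => ?_
      rw [Real.sq_sqrt (hyynn j), Real.sq_sqrt (hzznn j)]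
    have hsq2 : ∑ j ∈ Finset.Icc 1 n, Real.sqrt (ee j) ^ 2 = ∑ j ∈ Finset.Icc 1 n, ee j := by
      refine Finset.sum_congr rfl fun j _ => ?_
      rw [Real.sq_sqrt (heenn j)]
    have hσ : ∫ ω, (∑ j ∈ Finset.Icc 1 n, g j (ξ j ω)) ^ 2 ∂P
        = ∑ j ∈ Finset.Icc 1 n, (yy j - zz j) := sqid n 1 (by omega) le_rfl
    obtain ⟨hlow', hup'⟩ := hnum
    rw [hsq1, hsq2] at hlow' hup'
    have hconst1 : (1 - (1-a)) / (1 + (1-a)) = a / (2 - a) := by ring_nf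
    have hconst2 : (1 - (1-a))⁻¹ * (1 + (1-a)) = (2 - a) / a := by
      rw [show (1:ℝ) - (1-a) = a by ring, show (1:ℝ) + (1-a) = 2 - a by ring,
        inv_mul_eq_div]
    rw [hconst1] at hlow'
    rw [hconst2] at hup'
    constructor
    · rw [hσ]
      exact hlow'
    · rw [hσ]
      exact hup'
  refine ⟨key, ?_⟩
  have hc1 : (0:ℝ) < a / (2 - a) := div_pos ha (by linarith)
  have hc2 : (0:ℝ) < (2 - a) / a := div_pos (by linarith) ha
  constructor
  · intro hτ
    refine tendsto_atTop_mono (fun n => (key n).1) ?_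
    exact hτ.const_mul_atTop hc1
  · intro hσ
    refine tendsto_atTop_mono (fun n => ?_) (hσ.const_mul_atTop (inv_pos.mpr hc2))
    rw [inv_mul_le_iff₀ hc2]
    exact (key n).2

end Main



/-- Under the two-sided kernel domination condition with lower constant `a > 0`,
`(a/(2-a)) τ_n² ≤ σ_n² ≤ ((2-a)/a) τ_n²`; in particular `τ_n² → ∞ ↔ σ_n² → ∞`. -/
theorem variance_comparison_kernel_domination
    {Ω S : Type*} {m : MeasurableSpace Ω} [MeasurableSpace S]
    (P : Measure Ω) [IsProbabilityMeasure P]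
    (ξ : ℕ → Ω → S) (hξ : ∀ k, Measurable (ξ k))
    (Q : ℕ → ProbabilityTheory.Kernel S S) [∀ k, ProbabilityTheory.IsMarkovKernel (Q k)]
    -- Markov property
    (hMarkov : ∀ k, 2 ≤ k → ∀ h : S → ℝ, Measurable h → (∀ y, |h y| ≤ 1) →
      P[(fun ω => h (ξ k ω)) |
          ⨆ i ∈ Finset.Icc 1 (k - 1), MeasurableSpace.comap (ξ i) inferInstance]
        =ᵐ[P] fun ω => ∫ y, h y ∂(Q k (ξ (k - 1) ω)))
    (a b : ℝ) (ha : 0 < a) (ha1 : a ≤ 1) (hb1 : 1 ≤ b)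
    -- two-sided kernel domination by the marginals `P_k = P ∘ ξ_k⁻¹`
    (hdom : ∀ k, 2 ≤ k → ∃ S' : Set S, MeasurableSet S' ∧
      Measure.map (ξ (k - 1)) P S' = 1 ∧
      ∀ x ∈ S', ∀ A : Set S, MeasurableSet A →
        a * (Measure.map (ξ k) P A).toReal ≤ (Q k x A).toReal ∧
        (Q k x A).toReal ≤ b * (Measure.map (ξ k) P A).toReal)
    (g : ℕ → S → ℝ) (hgmeas : ∀ k, Measurable (g k))
    (hL2 : ∀ k, MemLp (fun ω => g k (ξ k ω)) 2 P)
    (hcent : ∀ k, ∫ ω, g k (ξ k ω) ∂P = 0) :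
    (∀ n : ℕ,
      a / (2 - a) * ∑ j ∈ Finset.Icc 1 n, ∫ ω, g j (ξ j ω) ^ 2 ∂P ≤
          (∫ ω, (∑ j ∈ Finset.Icc 1 n, g j (ξ j ω)) ^ 2 ∂P) ∧
        (∫ ω, (∑ j ∈ Finset.Icc 1 n, g j (ξ j ω)) ^ 2 ∂P) ≤
          (2 - a) / a * ∑ j ∈ Finset.Icc 1 n, ∫ ω, g j (ξ j ω) ^ 2 ∂P) ∧
    (Tendsto (fun n => ∑ j ∈ Finset.Icc 1 n, ∫ ω, g j (ξ j ω) ^ 2 ∂P) atTop atTop ↔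
      Tendsto (fun n => ∫ ω, (∑ j ∈ Finset.Icc 1 n, g j (ξ j ω)) ^ 2 ∂P) atTop atTop) := by
  exact variance_comparison_kernel_domination' P ξ hξ Q hMarkov a b ha ha1 hb1 hdom g hgmeas
    hL2 hcent
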